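/- If λ, μ ∈ ℂ satisfy |λ| > 1, |μ| > 1 and λ ≠ μ, then F^{(λ)} ≠ F^{(μ)} as subspaces of ℓ∞(ℤ); moreover for every λ with |λ| > 1, F^{(λ)} ≠ c₀(ℤ) (the closed subspace of ℓ∞(ℤ) of sequences tending to 0 at ±∞). Consequently the weak*-topologies σ(ℓ₁(ℤ), F^{(λ)}) for |λ| > 1 are pairwise distinct and all distinct from σ(ℓ₁(ℤ), c₀(ℤ)). -/

import Mathlib

open scoped ENNReal
open Filter Topology

noncomputable section

/-- `ℓ₁(ℤ)`, the complex Banach space of absolutely summable bilateral sequences. -/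
abbrev ellOne : Type := lp (fun _ : ℤ => ℂ) 1

/-- `ℓ∞(ℤ)`, the complex Banach space of bounded bilateral sequences. -/
abbrev ellInf : Type := lp (fun _ : ℤ => ℂ) ∞

lemma memℓp_zshift (m : ℤ) (x : ellInf) : Memℓp (fun n : ℤ => x (n - m)) ∞ := by
  have hx := memℓp_infty_iff.1 (lp.memℓp x)
  refine memℓp_infty (hx.mono ?_)
  rintro r ⟨n, rfl⟩
  exact ⟨n - m, rfl⟩

/-- translation by `m` on `ℓ∞(ℤ)`: `(zshift m x) n = x (n - m)`.  In particular `zshift 1` is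
the bilateral shift `σ`, with `σ(x)(n) = x (n - 1)`, and `zshift m = σ^m`. -/
def zshift (m : ℤ) (x : ellInf) : ellInf := ⟨fun n => x (n - m), memℓp_zshift m x⟩

/-- `F ⊆ ℓ∞(ℤ)` is a concrete predual of `ℓ₁(ℤ)`: a closed subspace such that the canonical
map `ι_F : ℓ₁(ℤ) → F*`, `⟨ι_F a, x⟩ = ∑_n x(n) a(n)`, is an isomorphism of Banach spaces
(a bounded linear bijection with bounded inverse, not necessarily isometric). -/
def IsConcretePredual (F : Submodule ℂ ellInf) : Prop :=
  IsClosed (F : Set ellInf) ∧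
  ∃ e : ellOne ≃L[ℂ] StrongDual ℂ F,
    ∀ (a : ellOne) (x : F), e a x = ∑' n : ℤ, (x : ellInf) n * a n

/-- The weak* topology `σ(ℓ₁(ℤ), F)` on `ℓ₁(ℤ)` induced by a subspace `F ⊆ ℓ∞(ℤ)`:
the coarsest topology making `a ↦ ∑_n x(n) a(n)` continuous for every `x ∈ F`. -/
def weakStar (F : Submodule ℂ ellInf) : TopologicalSpace ellOne :=
  ⨅ x ∈ F, TopologicalSpace.induced (fun a : ellOne => ∑' n : ℤ, x n * a n) inferInstance

/-- `b(n)` = number of ones in the binary expansion of `n ≥ 0`. -/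
def binOnes (n : ℤ) : ℕ := (Nat.digits 2 n.toNat).sum

/-- the element `x₀`: `x₀(n) = λ^{-b(n)}` for `n ≥ 0` and `x₀(n) = 0` for `n < 0`. -/
def x0Fun (lam : ℂ) : ℤ → ℂ := fun n => if 0 ≤ n then lam⁻¹ ^ binOnes n else 0

lemma x0_mem (lam : ℂ) (h : 1 < ‖lam‖) : Memℓp (x0Fun lam) ∞ := by
  refine memℓp_infty ⟨1, ?_⟩
  rintro r ⟨n, rfl⟩
  simp only [x0Fun]
  split_ifs
  · rw [norm_pow]
    refine pow_le_one₀ (norm_nonneg _) ?_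
    rw [norm_inv]
    exact inv_le_one_of_one_le₀ h.le
  · simp

/-- `x₀` as an element of `ℓ∞(ℤ)`. -/
def x0L (lam : ℂ) (h : 1 < ‖lam‖) : ellInf := ⟨x0Fun lam, x0_mem lam h⟩

/-- `F^{(λ)}`: the closed linear span in `ℓ∞(ℤ)` of the bilateral shifts `σ^m(x₀)`, `m ∈ ℤ`. -/
def Flam (lam : ℂ) (h : 1 < ‖lam‖) : Submodule ℂ ellInf :=
  (Submodule.span ℂ (Set.range fun m : ℤ => zshift m (x0L lam h))).topologicalClosure

/-- `c₀(ℤ)`, the closed subspace of `ℓ∞(ℤ)` of sequences tending to `0` at `±∞`. -/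
def c0Z : Submodule ℂ ellInf where
  carrier := {x : ellInf | Tendsto (fun n : ℤ => x n) cofinite (𝓝 0)}
  add_mem' := by
    intro a b ha hb
    have := ha.add hb
    simpa [lp.coeFn_add, Pi.add_apply] using this
  zero_mem' := by
    simp [lp.coeFn_zero]
  smul_mem' := by
    intro c x hx
    have := hx.const_mul c
    simpa [lp.coeFn_smul, Pi.smul_apply, smul_eq_mul] using this

/-! ### Auxiliary lemmas -/

namespace St8Aux

/-- binary digit sum on naturals -/
def bN (n : ℕ) : ℕ := (Nat.digits 2 n).sum

lemma bN_zero : bN 0 = 0 := by simp [bN]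

lemma bN_one : bN 1 = 1 := by simp [bN]

lemma bN_two_mul (n : ℕ) : bN (2 * n) = bN n := by
  rcases Nat.eq_zero_or_pos n with rfl | hn
  · simp
  · unfold bN
    rw [Nat.digits_def' (by norm_num : 1 < 2) (by positivity)]
    simp [Nat.mul_div_cancel_left _ (by norm_num : 0 < 2)]

lemma bN_two_mul_add_one (n : ℕ) : bN (2 * n + 1) = bN n + 1 := by
  unfold bN
  rw [Nat.digits_def' (by norm_num : 1 < 2) (by positivity)]
  have h1 : (2 * n + 1) % 2 = 1 := by omega
  have h2 : (2 * n + 1) / 2 = n := by omega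
  rw [h1, h2]
  simp [Nat.add_comm]

lemma bN_pow_add : ∀ (K j : ℕ), j < 2 ^ K → bN (2 ^ K + j) = 1 + bN j := by
  intro K
  induction K with
  | zero =>
      intro j hj
      interval_cases j
      simp [bN_one, bN_zero]
  | succ K ih =>
      intro j hj
      rcases Nat.even_or_odd j with ⟨j', rfl⟩ | ⟨j', rfl⟩
      · have hj' : j' < 2 ^ K := by
          rw [pow_succ] at hj; omega
        have h : 2 ^ (K + 1) + (j' + j') = 2 * (2 ^ K + j') := by ring
        rw [h, bN_two_mul, ih j' hj']
        have : j' + j' = 2 * j' := by ring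
        rw [this, bN_two_mul]
      · have hj' : j' < 2 ^ K := by
          rw [pow_succ] at hj; omega
        have h : 2 ^ (K + 1) + (2 * j' + 1) = 2 * (2 ^ K + j') + 1 := by ring
        rw [h, bN_two_mul_add_one, ih j' hj', bN_two_mul_add_one]
        omega

lemma bN_pow (K : ℕ) : bN (2 ^ K) = 1 := by
  have := bN_pow_add K 0 (by positivity)
  simpa [bN_zero] using this

lemma bN_pow_sub_ge (t m : ℕ) (hm : 1 ≤ m) (hmt : m ≤ 2 ^ t) :
    ∀ K, t ≤ K → K - t ≤ bN (2 ^ K - m) := by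
  intro K hK
  induction K, hK using Nat.le_induction with
  | base => simp
  | succ K hK ih =>
      have hmK : m ≤ 2 ^ K := hmt.trans (Nat.pow_le_pow_right (by norm_num) hK)
      have h1 : 2 ^ (K + 1) - m = 2 ^ K + (2 ^ K - m) := by
        have : 2 ^ (K + 1) = 2 ^ K + 2 ^ K := by ring
        omega
      have h2 : 2 ^ K - m < 2 ^ K := by omega
      rw [h1, bN_pow_add K _ h2]
      omega

lemma bN_pow_sub_tendsto (m : ℕ) (hm : 1 ≤ m) :
    Filter.Tendsto (fun K => bN (2 ^ K - m)) Filter.atTop Filter.atTop := by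
  refine Filter.tendsto_atTop_mono' _ ?_ (Filter.tendsto_sub_atTop_nat m)
  filter_upwards [Filter.eventually_ge_atTop m] with K hK
  exact bN_pow_sub_ge m m hm (Nat.lt_two_pow_self (n := m)).le K hK

end St8Aux

namespace St8Aux

/-- positions -/
def PP (k : ℕ) : ℕ := 2 ^ (2 * k) + 2 ^ k
def QQ (k : ℕ) : ℕ := 2 ^ (2 * k)

lemma x0Fun_natCast (lam : ℂ) (n : ℕ) : x0Fun lam (n : ℤ) = lam⁻¹ ^ bN n := by
  simp only [x0Fun, binOnes, bN]
  rw [if_pos (Int.natCast_nonneg n), Int.toNat_natCast]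

lemma zshift_apply (m : ℤ) (x : ellInf) (n : ℤ) : (zshift m x : ∀ _ : ℤ, ℂ) n = x (n - m) := rfl

lemma x0L_apply (lam : ℂ) (h : 1 < ‖lam‖) (n : ℤ) :
    (x0L lam h : ∀ _ : ℤ, ℂ) n = x0Fun lam n := rfl

lemma norm_inv_lt_one {lam : ℂ} (hl : 1 < ‖lam‖) : ‖lam⁻¹‖ < 1 := by
  rw [norm_inv]
  exact inv_lt_one_of_one_lt₀ hl

lemma lam_ne_zero {lam : ℂ} (hl : 1 < ‖lam‖) : lam ≠ 0 := by
  intro h; rw [h, norm_zero] at hl; linarith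

lemma pow_bN_tendsto {lam : ℂ} (hl : 1 < ‖lam‖) {f : ℕ → ℕ}
    (hf : Filter.Tendsto f Filter.atTop Filter.atTop) :
    Filter.Tendsto (fun k => lam⁻¹ ^ f k) Filter.atTop (𝓝 0) :=
  (tendsto_pow_atTop_nhds_zero_of_norm_lt_one (norm_inv_lt_one hl)).comp hf

/-- the generator pairing tends to 0 -/
lemma gen_tendsto (lam : ℂ) (hl : 1 < ‖lam‖) (m : ℤ) :
    Filter.Tendsto
      (fun k : ℕ => x0Fun lam ((PP k : ℤ) - m) - lam⁻¹ * x0Fun lam ((QQ k : ℤ) - m))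
      Filter.atTop (𝓝 0) := by
  rcases le_or_gt m 0 with hm | hm
  · -- m ≤ 0 : eventually exactly zero
    obtain ⟨j, rfl⟩ : ∃ j : ℕ, m = -(j : ℤ) := ⟨(-m).toNat, by omega⟩
    apply Filter.Tendsto.congr' _ tendsto_const_nhds
    filter_upwards [Filter.eventually_ge_atTop 1, Filter.eventually_ge_atTop j] with k hk1 hkj
    have hj2k : j < 2 ^ k := lt_of_le_of_lt hkj (Nat.lt_two_pow_self (n := k))
    have hsum : 2 ^ k + j < 2 ^ (2 * k) := by
      have h1 : 2 ^ k + j < 2 ^ (k + 1) := by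
        rw [pow_succ]; omega
      have h2 : 2 ^ (k + 1) ≤ 2 ^ (2 * k) := Nat.pow_le_pow_right (by norm_num) (by omega)
      omega
    have e1 : (PP k : ℤ) - (-(j : ℤ)) = ((PP k + j : ℕ) : ℤ) := by push_cast; ring
    have e2 : (QQ k : ℤ) - (-(j : ℤ)) = ((QQ k + j : ℕ) : ℤ) := by push_cast; ring
    rw [e1, e2, x0Fun_natCast, x0Fun_natCast]
    have hb1 : bN (PP k + j) = 2 + bN j := by
      have : PP k + j = 2 ^ (2 * k) + (2 ^ k + j) := by unfold PP; ring
      rw [this, bN_pow_add _ _ hsum, bN_pow_add _ _ hj2k]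
      omega
    have hb2 : bN (QQ k + j) = 1 + bN j := by
      unfold QQ
      exact bN_pow_add _ _ (lt_trans (by omega) hsum)
    rw [hb1, hb2]
    have : 2 + bN j = 1 + (1 + bN j) := by ring
    rw [this, pow_add, pow_one]
    ring
  · -- m ≥ 1 : both terms tend to zero
    obtain ⟨j, hj1, rfl⟩ : ∃ j : ℕ, 1 ≤ j ∧ m = (j : ℤ) := ⟨m.toNat, by omega, by omega⟩
    have hT1 : Filter.Tendsto (fun k : ℕ => x0Fun lam ((PP k : ℤ) - (j : ℤ)))
        Filter.atTop (𝓝 0) := by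
      have hexp : Filter.Tendsto (fun k : ℕ => 1 + bN (2 ^ k - j)) Filter.atTop Filter.atTop :=
        Filter.tendsto_atTop_mono (fun k => by omega) (bN_pow_sub_tendsto j hj1)
      apply Filter.Tendsto.congr' _ (pow_bN_tendsto hl hexp)
      filter_upwards [Filter.eventually_ge_atTop j] with k hkj
      have hj2k : j ≤ 2 ^ k := hkj.trans (Nat.lt_two_pow_self (n := k)).le
      have e1 : (PP k : ℤ) - (j : ℤ) = ((PP k - j : ℕ) : ℤ) := by
        have h3 : j ≤ PP k := by
          unfold PP
          exact le_trans hj2k (Nat.le_add_left _ _)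
        exact (Int.natCast_sub h3).symm
      rw [e1, x0Fun_natCast]
      congr 1
      have h1 : PP k - j = 2 ^ (2 * k) + (2 ^ k - j) := by
        unfold PP
        exact Nat.add_sub_assoc hj2k _
      have h2 : 2 ^ k - j < 2 ^ (2 * k) := by
        have : 2 ^ k ≤ 2 ^ (2 * k) := Nat.pow_le_pow_right (by norm_num) (by omega)
        omega
      rw [h1, bN_pow_add _ _ h2]
    have hT2 : Filter.Tendsto (fun k : ℕ => lam⁻¹ * x0Fun lam ((QQ k : ℤ) - (j : ℤ)))
        Filter.atTop (𝓝 0) := by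
      have hexp : Filter.Tendsto (fun k : ℕ => bN (2 ^ (2 * k) - j)) Filter.atTop Filter.atTop :=
        (bN_pow_sub_tendsto j hj1).comp
          (Filter.tendsto_atTop_mono (fun k => Nat.le_mul_of_pos_left k (by norm_num))
            Filter.tendsto_id)
      have := (pow_bN_tendsto hl hexp).const_mul lam⁻¹
      rw [mul_zero] at this
      apply Filter.Tendsto.congr' _ this
      filter_upwards [Filter.eventually_ge_atTop j] with k hkj
      have hj2k : j ≤ 2 ^ (2 * k) := by
        have : j < 2 ^ j := Nat.lt_two_pow_self (n := j)
        have h2 : 2 ^ j ≤ 2 ^ (2 * k) := Nat.pow_le_pow_right (by norm_num) (by omega)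
        omega
      have e2 : (QQ k : ℤ) - (j : ℤ) = ((QQ k - j : ℕ) : ℤ) := by
        exact (Int.natCast_sub hj2k).symm
      rw [e2, x0Fun_natCast]
      rfl
    simpa using hT1.sub hT2

/-- every element of `Flam` has the pairing tending to zero -/
lemma flam_tendsto (lam : ℂ) (hl : 1 < ‖lam‖) :
    ∀ y ∈ Flam lam hl,
      Filter.Tendsto
        (fun k : ℕ => (y : ∀ _ : ℤ, ℂ) ((PP k : ℤ)) - lam⁻¹ * (y : ∀ _ : ℤ, ℂ) ((QQ k : ℤ)))
        Filter.atTop (𝓝 0) := by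
  set S : Submodule ℂ ellInf :=
    { carrier := {y : ellInf | Filter.Tendsto
        (fun k : ℕ => (y : ∀ _ : ℤ, ℂ) ((PP k : ℤ)) - lam⁻¹ * (y : ∀ _ : ℤ, ℂ) ((QQ k : ℤ)))
        Filter.atTop (𝓝 0)}
      add_mem' := by
        intro a b ha hb
        have := ha.add hb
        rw [add_zero] at this
        apply Filter.Tendsto.congr _ this
        intro k
        simp only [lp.coeFn_add, Pi.add_apply]
        ring
      zero_mem' := by
        simp only [Set.mem_setOf_eq, lp.coeFn_zero, Pi.zero_apply, mul_zero, sub_zero]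
        exact tendsto_const_nhds
      smul_mem' := by
        intro c x hx
        have := hx.const_mul c
        rw [mul_zero] at this
        apply Filter.Tendsto.congr _ this
        intro k
        simp only [lp.coeFn_smul, Pi.smul_apply, smul_eq_mul]
        ring } with hS
  have hbound : ∀ (y : ellInf) (k : ℕ),
      ‖(y : ∀ _ : ℤ, ℂ) ((PP k : ℤ)) - lam⁻¹ * (y : ∀ _ : ℤ, ℂ) ((QQ k : ℤ))‖
        ≤ (1 + ‖lam⁻¹‖) * ‖y‖ := by
    intro y k
    calc ‖(y : ∀ _ : ℤ, ℂ) ((PP k : ℤ)) - lam⁻¹ * (y : ∀ _ : ℤ, ℂ) ((QQ k : ℤ))‖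
        ≤ ‖(y : ∀ _ : ℤ, ℂ) ((PP k : ℤ))‖ + ‖lam⁻¹ * (y : ∀ _ : ℤ, ℂ) ((QQ k : ℤ))‖ :=
          norm_sub_le _ _
      _ ≤ ‖y‖ + ‖lam⁻¹‖ * ‖y‖ := by
          rw [norm_mul]
          gcongr
          · exact lp.norm_apply_le_norm ENNReal.top_ne_zero y _
          · exact lp.norm_apply_le_norm ENNReal.top_ne_zero y _
      _ = (1 + ‖lam⁻¹‖) * ‖y‖ := by ring
  have hclosed : IsClosed (S : Set ellInf) := by
    refine isClosed_of_closure_subset ?_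
    intro y hy
    rw [Metric.mem_closure_iff] at hy
    simp only [SetLike.mem_coe, hS, Submodule.mem_mk, AddSubmonoid.mem_mk,
      AddSubsemigroup.mem_mk, Set.mem_setOf_eq]
    rw [Metric.tendsto_atTop]
    intro ε hε
    set C : ℝ := 1 + ‖lam⁻¹‖ with hC
    have hCpos : 0 < C := by positivity
    obtain ⟨z, hzS, hdz⟩ := hy (ε / (2 * C)) (by positivity)
    have hzS' : Filter.Tendsto
        (fun k : ℕ => (z : ∀ _ : ℤ, ℂ) ((PP k : ℤ)) - lam⁻¹ * (z : ∀ _ : ℤ, ℂ) ((QQ k : ℤ)))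
        Filter.atTop (𝓝 0) := hzS
    obtain ⟨N, hN⟩ := (Metric.tendsto_atTop.1 hzS') (ε / 2) (by positivity)
    refine ⟨N, fun k hk => ?_⟩
    rw [dist_zero_right]
    have h1 := hN k hk
    rw [dist_zero_right] at h1
    have hsplit : (y : ∀ _ : ℤ, ℂ) ((PP k : ℤ)) - lam⁻¹ * (y : ∀ _ : ℤ, ℂ) ((QQ k : ℤ))
        = ((y - z : ellInf) : ∀ _ : ℤ, ℂ) ((PP k : ℤ))
            - lam⁻¹ * ((y - z : ellInf) : ∀ _ : ℤ, ℂ) ((QQ k : ℤ))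
          + ((z : ∀ _ : ℤ, ℂ) ((PP k : ℤ)) - lam⁻¹ * (z : ∀ _ : ℤ, ℂ) ((QQ k : ℤ))) := by
      simp only [lp.coeFn_sub, Pi.sub_apply]
      ring
    rw [hsplit]
    calc ‖_ + _‖ ≤ _ + _ := norm_add_le _ _
      _ < C * (ε / (2 * C)) + ε / 2 := by
          apply add_lt_add_of_le_of_lt
          · calc ‖_‖ ≤ C * ‖y - z‖ := hbound (y - z) k
              _ ≤ _ := by
                apply mul_le_mul_of_nonneg_left _ hCpos.le
                rw [← dist_eq_norm]
                exact hdz.le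
          · exact h1
      _ ≤ ε := by
          have h4 : C * (ε / (2 * C)) = ε / 2 := by
            field_simp
          rw [h4]
          linarith
  have hspan : Submodule.span ℂ (Set.range fun m : ℤ => zshift m (x0L lam hl)) ≤ S := by
    rw [Submodule.span_le]
    rintro _ ⟨m, rfl⟩
    show Filter.Tendsto _ Filter.atTop (𝓝 0)
    have : ∀ k : ℕ, (zshift m (x0L lam hl) : ∀ _ : ℤ, ℂ) ((PP k : ℤ))
        - lam⁻¹ * (zshift m (x0L lam hl) : ∀ _ : ℤ, ℂ) ((QQ k : ℤ))
        = x0Fun lam ((PP k : ℤ) - m) - lam⁻¹ * x0Fun lam ((QQ k : ℤ) - m) := fun k => rfl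
    rw [show (fun k : ℕ => (zshift m (x0L lam hl) : ∀ _ : ℤ, ℂ) ((PP k : ℤ))
        - lam⁻¹ * (zshift m (x0L lam hl) : ∀ _ : ℤ, ℂ) ((QQ k : ℤ))) = _ from funext this]
    exact gen_tendsto lam hl m
  intro y hy
  exact Submodule.topologicalClosure_minimal _ hspan hclosed hy

end St8Aux

namespace St8Aux

lemma tsum_mul_single (y : ellInf) (p : ℤ) (c : ℂ) :
    ∑' n : ℤ, y n * (lp.single 1 p c : ellOne) n = y p * c := by
  have h : ∀ n : ℤ, y n * (lp.single 1 p c : ellOne) n = if n = p then y p * c else 0 := by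
    intro n
    rcases eq_or_ne n p with rfl | h
    · rw [lp.single_apply_self, if_pos rfl]
    · rw [lp.single_apply_ne _ _ _ h, mul_zero, if_neg h]
  rw [tsum_congr h]
  exact (hasSum_ite_eq p (y p * c)).tsum_eq

lemma tsum_mul_pair (y : ellInf) (p q : ℤ) (c d : ℂ) :
    ∑' n : ℤ, y n * ((lp.single 1 p c + lp.single 1 q d : ellOne)) n = y p * c + y q * d := by
  have h : ∀ n : ℤ, y n * ((lp.single 1 p c + lp.single 1 q d : ellOne)) n
      = (if n = p then y p * c else 0) + (if n = q then y q * d else 0) := by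
    intro n
    rw [lp.coeFn_add, Pi.add_apply, mul_add]
    congr 1
    · rcases eq_or_ne n p with rfl | h
      · rw [lp.single_apply_self, if_pos rfl]
      · rw [lp.single_apply_ne _ _ _ h, mul_zero, if_neg h]
    · rcases eq_or_ne n q with rfl | h
      · rw [lp.single_apply_self, if_pos rfl]
      · rw [lp.single_apply_ne _ _ _ h, mul_zero, if_neg h]
  rw [tsum_congr h]
  exact ((hasSum_ite_eq p (y p * c)).add (hasSum_ite_eq q (y q * d))).tsum_eq

lemma x0L_mem_Flam (lam : ℂ) (hl : 1 < ‖lam‖) : x0L lam hl ∈ Flam lam hl := by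
  apply Submodule.le_topologicalClosure
  apply Submodule.subset_span
  refine ⟨0, ?_⟩
  apply Subtype.ext
  funext n
  show x0Fun lam (n - 0) = x0Fun lam n
  rw [sub_zero]

/-- the constant value of the pairing of `x₀^{(μ)}` against the `(P k, Q k)` functional. -/
lemma x0mu_pair_eventually (lam mu : ℂ) (hm : 1 < ‖mu‖) :
    ∀ᶠ k : ℕ in Filter.atTop,
      (x0L mu hm : ∀ _ : ℤ, ℂ) ((PP k : ℤ)) - lam⁻¹ * (x0L mu hm : ∀ _ : ℤ, ℂ) ((QQ k : ℤ))
        = mu⁻¹ * (mu⁻¹ - lam⁻¹) := by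
  filter_upwards [Filter.eventually_ge_atTop 1] with k hk1
  rw [x0L_apply, x0L_apply, x0Fun_natCast, x0Fun_natCast]
  have hb1 : bN (PP k) = 2 := by
    have hlt : 2 ^ k < 2 ^ (2 * k) := Nat.pow_lt_pow_right (by norm_num) (by omega)
    unfold PP
    rw [bN_pow_add _ _ hlt, bN_pow]
  have hb2 : bN (QQ k) = 1 := bN_pow _
  rw [hb1, hb2]
  ring

lemma x0mu_pair_const_ne (lam mu : ℂ) (hl : 1 < ‖lam‖) (hm : 1 < ‖mu‖) (hne : lam ≠ mu) :
    mu⁻¹ * (mu⁻¹ - lam⁻¹) ≠ 0 := by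
  have hmu : mu ≠ 0 := lam_ne_zero hm
  refine mul_ne_zero (inv_ne_zero hmu) ?_
  rw [sub_ne_zero]
  intro h
  exact hne (inv_injective h).symm

lemma x0mu_not_tendsto (lam mu : ℂ) (hl : 1 < ‖lam‖) (hm : 1 < ‖mu‖) (hne : lam ≠ mu) :
    ¬ Filter.Tendsto
      (fun k : ℕ => (x0L mu hm : ∀ _ : ℤ, ℂ) ((PP k : ℤ))
        - lam⁻¹ * (x0L mu hm : ∀ _ : ℤ, ℂ) ((QQ k : ℤ)))
      Filter.atTop (𝓝 0) := by
  intro h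
  have h2 : Filter.Tendsto (fun _ : ℕ => mu⁻¹ * (mu⁻¹ - lam⁻¹)) Filter.atTop (𝓝 0) :=
    h.congr' (x0mu_pair_eventually lam mu hm)
  have h3 := (tendsto_nhds_unique h2 tendsto_const_nhds).symm
  exact x0mu_pair_const_ne lam mu hl hm hne h3

/-- `x₀^{(μ)} ∉ F^{(λ)}` when `λ ≠ μ`. -/
lemma x0mu_not_mem (lam mu : ℂ) (hl : 1 < ‖lam‖) (hm : 1 < ‖mu‖) (hne : lam ≠ mu) :
    x0L mu hm ∉ Flam lam hl := by
  intro hmem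
  exact x0mu_not_tendsto lam mu hl hm hne (flam_tendsto lam hl _ hmem)

lemma two_pow_tendsto_cofinite :
    Filter.Tendsto (fun k : ℕ => ((2 ^ k : ℕ) : ℤ)) Filter.atTop Filter.cofinite := by
  have hinj : Function.Injective (fun k : ℕ => ((2 ^ k : ℕ) : ℤ)) := by
    intro a b hab
    have h : ((2 ^ a : ℕ) : ℤ) = ((2 ^ b : ℕ) : ℤ) := hab
    exact Nat.pow_right_injective (by norm_num) (Int.natCast_inj.mp h)
  have := hinj.tendsto_cofinite
  rwa [Nat.cofinite_eq_atTop] at this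

lemma x0lam_pow_pair (lam : ℂ) (hl : 1 < ‖lam‖) (k : ℕ) :
    (x0L lam hl : ∀ _ : ℤ, ℂ) (((2 ^ k : ℕ) : ℤ)) = lam⁻¹ := by
  rw [x0L_apply, x0Fun_natCast, bN_pow, pow_one]

lemma x0lam_not_tendsto_pow (lam : ℂ) (hl : 1 < ‖lam‖) :
    ¬ Filter.Tendsto (fun k : ℕ => (x0L lam hl : ∀ _ : ℤ, ℂ) (((2 ^ k : ℕ) : ℤ)))
      Filter.atTop (𝓝 0) := by
  intro h
  have h2 : Filter.Tendsto (fun _ : ℕ => lam⁻¹) Filter.atTop (𝓝 0) :=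
    h.congr (fun k => x0lam_pow_pair lam hl k)
  have h3 := (tendsto_nhds_unique h2 tendsto_const_nhds).symm
  exact inv_ne_zero (lam_ne_zero hl) h3

lemma x0lam_not_mem_c0 (lam : ℂ) (hl : 1 < ‖lam‖) : x0L lam hl ∉ c0Z := by
  intro hmem
  have h : Filter.Tendsto (fun n : ℤ => (x0L lam hl : ∀ _ : ℤ, ℂ) n)
      Filter.cofinite (𝓝 0) := hmem
  exact x0lam_not_tendsto_pow lam hl (h.comp two_pow_tendsto_cofinite)

lemma c0_tendsto (y : ellInf) (hy : y ∈ c0Z) :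
    Filter.Tendsto (fun k : ℕ => (y : ∀ _ : ℤ, ℂ) (((2 ^ k : ℕ) : ℤ)))
      Filter.atTop (𝓝 0) := by
  have h : Filter.Tendsto (fun n : ℤ => (y : ∀ _ : ℤ, ℂ) n) Filter.cofinite (𝓝 0) := hy
  exact h.comp two_pow_tendsto_cofinite

/-- key weak-star lemma: if `x ∈ F` and a sequence `a : ℕ → ellOne` converges to `0` in
`σ(ℓ₁, F)`, then the pairing of `x` with `a k` tends to `0`. -/
lemma weakStar_pairing_tendsto (F : Submodule ℂ ellInf) (x : ellInf) (hx : x ∈ F)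
    (a : ℕ → ellOne)
    (ha : Filter.Tendsto a Filter.atTop (@nhds _ (weakStar F) 0)) :
    Filter.Tendsto (fun k => ∑' n : ℤ, x n * a k n) Filter.atTop (𝓝 0) := by
  have hcont : @Continuous ellOne ℂ (weakStar F) _ (fun b : ellOne => ∑' n : ℤ, x n * b n) := by
    rw [continuous_iff_le_induced]
    exact iInf₂_le x hx
  have h0 : (∑' n : ℤ, x n * (0 : ellOne) n) = 0 := by
    simp [lp.coeFn_zero]
  have hT := @Continuous.tendsto ellOne ℂ (weakStar F) _ _ hcont 0
  have := hT.comp ha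
  rwa [Function.comp_def, h0] at this

/-- convergence to 0 in `σ(ℓ₁, F)` follows from pairing convergence for all members of `F`. -/
lemma tendsto_weakStar_zero (F : Submodule ℂ ellInf) (a : ℕ → ellOne)
    (ha : ∀ y ∈ F, Filter.Tendsto (fun k => ∑' n : ℤ, y n * a k n) Filter.atTop (𝓝 0)) :
    Filter.Tendsto a Filter.atTop (@nhds _ (weakStar F) 0) := by
  have hnhds : @nhds ellOne (weakStar F) 0
      = ⨅ y : ellInf, ⨅ _ : y ∈ F, @nhds ellOne
          (TopologicalSpace.induced (fun a : ellOne => ∑' n : ℤ, y n * a n) inferInstance) 0 := by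
    unfold weakStar
    rw [_root_.nhds_iInf]
    exact iInf_congr fun y => _root_.nhds_iInf
  rw [hnhds, Filter.tendsto_iInf]
  intro y
  rw [Filter.tendsto_iInf]
  intro hy
  rw [nhds_induced, Filter.tendsto_comap_iff]
  have h0 : (∑' n : ℤ, y n * (0 : ellOne) n) = 0 := by
    simp [lp.coeFn_zero]
  rw [Function.comp_def, h0]
  exact ha y hy

end St8Aux

open St8Aux in
/-- Statement 8.  The subspaces `F^{(λ)}` (`|λ| > 1`) are pairwise distinct and all distinct
from `c₀(ℤ)`; consequently the induced weak*-topologies on `ℓ₁(ℤ)` are pairwise distinct and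
distinct from the one induced by `c₀(ℤ)`. -/
theorem statement_8 :
    (∀ (lam mu : ℂ) (hl : 1 < ‖lam‖) (hm : 1 < ‖mu‖), lam ≠ mu → Flam lam hl ≠ Flam mu hm) ∧
    (∀ (lam : ℂ) (hl : 1 < ‖lam‖), Flam lam hl ≠ c0Z) ∧
    (∀ (lam mu : ℂ) (hl : 1 < ‖lam‖) (hm : 1 < ‖mu‖), lam ≠ mu →
      weakStar (Flam lam hl) ≠ weakStar (Flam mu hm)) ∧
    (∀ (lam : ℂ) (hl : 1 < ‖lam‖), weakStar (Flam lam hl) ≠ weakStar c0Z) := by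
  refine ⟨?_, ?_, ?_, ?_⟩
  · -- F^λ ≠ F^μ
    intro lam mu hl hm hne heq
    exact x0mu_not_mem lam mu hl hm hne (heq ▸ x0L_mem_Flam mu hm)
  · -- F^λ ≠ c₀
    intro lam hl heq
    exact x0lam_not_mem_c0 lam hl (heq ▸ x0L_mem_Flam lam hl)
  · -- weak* topologies, λ vs μ
    intro lam mu hl hm hne heq
    set a : ℕ → ellOne := fun k =>
      lp.single 1 ((PP k : ℤ)) 1 + lp.single 1 ((QQ k : ℤ)) (-lam⁻¹) with ha_def
    have hpair : ∀ (y : ellInf) (k : ℕ), (∑' n : ℤ, y n * a k n)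
        = (y : ∀ _ : ℤ, ℂ) ((PP k : ℤ)) - lam⁻¹ * (y : ∀ _ : ℤ, ℂ) ((QQ k : ℤ)) := by
      intro y k
      rw [ha_def, tsum_mul_pair]
      ring
    have ha0 : Filter.Tendsto a Filter.atTop (@nhds _ (weakStar (Flam lam hl)) 0) := by
      apply tendsto_weakStar_zero
      intro y hy
      have h := flam_tendsto lam hl y hy
      exact h.congr (fun k => (hpair y k).symm)
    rw [heq] at ha0
    have h := weakStar_pairing_tendsto (Flam mu hm) (x0L mu hm) (x0L_mem_Flam mu hm) a ha0
    have h2 : Filter.Tendsto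
        (fun k : ℕ => (x0L mu hm : ∀ _ : ℤ, ℂ) ((PP k : ℤ))
          - lam⁻¹ * (x0L mu hm : ∀ _ : ℤ, ℂ) ((QQ k : ℤ))) Filter.atTop (𝓝 0) :=
      h.congr (fun k => hpair (x0L mu hm) k)
    exact x0mu_not_tendsto lam mu hl hm hne h2
  · -- weak* topology, λ vs c₀
    intro lam hl heq
    set a : ℕ → ellOne := fun k => lp.single 1 (((2 ^ k : ℕ) : ℤ)) 1 with ha_def
    have hpair : ∀ (y : ellInf) (k : ℕ), (∑' n : ℤ, y n * a k n)
        = (y : ∀ _ : ℤ, ℂ) (((2 ^ k : ℕ) : ℤ)) := by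
      intro y k
      rw [ha_def, tsum_mul_single, mul_one]
    have ha0 : Filter.Tendsto a Filter.atTop (@nhds _ (weakStar (Flam lam hl)) 0) := by
      rw [heq]
      apply tendsto_weakStar_zero
      intro y hy
      exact (c0_tendsto y hy).congr (fun k => (hpair y k).symm)
    have h := weakStar_pairing_tendsto (Flam lam hl) (x0L lam hl) (x0L_mem_Flam lam hl) a ha0
    exact x0lam_not_tendsto_pow lam hl (h.congr (fun k => hpair (x0L lam hl) k))
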